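/- Let G be a graph on n vertices of tree-width at most w whose complement Ḡ is closed under the Bondy–Chvátal closure (for Hamiltonian paths). Then Ḡ contains a clique on at least n − 2(w² + w) vertices; equivalently, there is a set S of at most 2(w² + w) vertices such that the vertices outside S are pairwise adjacent in Ḡ. -/

import Mathlib

open SimpleGraph Finset

set_option linter.unusedSectionVars false
namespace StmtAux

variable {ι : Type} [DecidableEq ι] {T : SimpleGraph ι}

/-- uniqueness of paths in a tree, walk version -/
lemma path_unique (hT : T.IsTree) {a b : ι} {p q : T.Walk a b}
    (hp : p.IsPath) (hq : q.IsPath) : p = q := by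
  have h := (SimpleGraph.isAcyclic_iff_path_unique.mp hT.IsAcyclic) (⟨p, hp⟩ : T.Path a b) ⟨q, hq⟩
  exact congrArg Subtype.val h

/-- the canonical path between two vertices of a tree -/
noncomputable def tp (hT : T.IsTree) (a b : ι) : T.Walk a b :=
  (hT.isConnected.exists_path_of_dist a b).choose

lemma tp_isPath (hT : T.IsTree) (a b : ι) : (tp hT a b).IsPath :=
  (hT.isConnected.exists_path_of_dist a b).choose_spec.1

lemma tp_length (hT : T.IsTree) (a b : ι) : (tp hT a b).length = T.dist a b :=
  (hT.isConnected.exists_path_of_dist a b).choose_spec.2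

lemma isPath_length (hT : T.IsTree) {a b : ι} (p : T.Walk a b) (hp : p.IsPath) :
    p.length = T.dist a b := by
  rw [path_unique hT hp (tp_isPath hT a b)]; exact tp_length hT a b

lemma eq_tp (hT : T.IsTree) {a b : ι} (p : T.Walk a b) (hp : p.IsPath) :
    p = tp hT a b := path_unique hT hp (tp_isPath hT a b)

lemma support_tp_subset (hT : T.IsTree) {a b : ι} (q : T.Walk a b) :
    (tp hT a b).support ⊆ q.support := by
  rw [← eq_tp hT q.bypass q.bypass_isPath]
  exact q.support_bypass_subset

lemma mem_support_dist (hT : T.IsTree) {a b x : ι} (hx : x ∈ (tp hT a b).support) :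
    T.dist a x + T.dist x b = T.dist a b := by
  have hsp := ((tp hT a b).take_spec hx).symm
  have htake := (tp_isPath hT a b).takeUntil hx
  have hdrop := (tp_isPath hT a b).dropUntil hx
  have h1 := isPath_length hT _ htake
  have h2 := isPath_length hT _ hdrop
  have h3 := congrArg SimpleGraph.Walk.length hsp
  rw [SimpleGraph.Walk.length_append, h1, h2, tp_length hT a b] at h3
  omega

lemma dist_pos_of_adj (hT : T.IsTree) {x y : ι} (hxy : T.Adj x y) : T.dist x y ≠ 0 := by
  intro h
  have : x = y := by
    have := hT.isConnected.preconnected x y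
    exact (SimpleGraph.Reachable.dist_eq_zero_iff this).mp h
  exact hxy.ne this

/-- going one step away from the root extends the canonical path -/
lemma adj_step (hT : T.IsTree) {r x y : ι} (hxy : T.Adj x y)
    (h : T.dist r x < T.dist r y) : tp hT r y = (tp hT r x).concat hxy := by
  have hy : y ∉ (tp hT r x).support := by
    intro hy
    have h1 := mem_support_dist hT hy
    have h2 : T.dist y x ≠ 0 := dist_pos_of_adj hT hxy.symm
    omega
  have hpath : ((tp hT r x).concat hxy).IsPath := by
    rw [← SimpleGraph.Walk.isPath_reverse_iff, SimpleGraph.Walk.reverse_concat]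
    apply SimpleGraph.Walk.IsPath.cons
    · rw [SimpleGraph.Walk.isPath_reverse_iff]; exact tp_isPath hT r x
    · rw [SimpleGraph.Walk.support_reverse, List.mem_reverse]; exact hy
  exact (eq_tp hT _ hpath).symm

lemma adj_dich (hT : T.IsTree) {r x y : ι} (hxy : T.Adj x y)
    (h : T.dist r x ≤ T.dist r y) : T.dist r x + 1 = T.dist r y := by
  rcases Nat.lt_or_ge (T.dist r x) (T.dist r y) with hlt | hge
  · have := adj_step hT hxy hlt
    have hl := tp_length hT r y
    rw [this, SimpleGraph.Walk.length_concat, tp_length hT r x] at hl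
    omega
  · -- distances equal
    have heq : T.dist r x = T.dist r y := le_antisymm h hge
    exfalso
    have hy : y ∉ (tp hT r x).support := by
      intro hy
      have h1 := mem_support_dist hT hy
      have h2 : T.dist y x ≠ 0 := dist_pos_of_adj hT hxy.symm
      omega
    have hpath : ((tp hT r x).concat hxy).IsPath := by
      rw [← SimpleGraph.Walk.isPath_reverse_iff, SimpleGraph.Walk.reverse_concat]
      apply SimpleGraph.Walk.IsPath.cons
      · rw [SimpleGraph.Walk.isPath_reverse_iff]; exact tp_isPath hT r x
      · rw [SimpleGraph.Walk.support_reverse, List.mem_reverse]; exact hy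
    have hl := isPath_length hT _ hpath
    rw [SimpleGraph.Walk.length_concat, tp_length hT r x] at hl
    omega

/-- the minimum-depth node of a set closed along walks: walking within `S` preserves
membership of `m` in the canonical path from the root -/
lemma walk_carry (hT : T.IsTree) (r m : ι) (S : Set ι)
    (hmin : ∀ j ∈ S, T.dist r m ≤ T.dist r j) :
    ∀ {a b : ι} (p : T.Walk a b), (∀ x ∈ p.support, x ∈ S) →
      m ∈ (tp hT r a).support → m ∈ (tp hT r b).support := by
  intro a b p
  induction p with
  | nil => exact fun _ h => h
  | @cons a c b hadj p ih =>
    intro hsup hm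
    have hcS : c ∈ S := hsup c (by simp)
    have haS : a ∈ S := hsup a (by simp)
    apply ih (fun x hx => hsup x (by simp [hx]))
    rcases Nat.lt_or_ge (T.dist r a) (T.dist r c) with hlt | hge
    · rw [adj_step hT hadj hlt, SimpleGraph.Walk.support_concat]
      rw [List.mem_append]
      exact Or.inl hm
    · rcases Nat.lt_or_ge (T.dist r c) (T.dist r a) with hlt2 | hge2
      · have hstep := adj_step hT hadj.symm hlt2
        rw [hstep, SimpleGraph.Walk.support_concat] at hm
        rw [List.mem_append] at hm
        rcases hm with hm' | hm'
        · exact hm'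
        · exfalso
          have : m = a := by simpa using hm'
          subst this
          have := hmin c hcS
          omega
      · exfalso
        have hd := adj_dich hT hadj hge2
        omega

lemma min_mem_support (hT : T.IsTree) (r : ι) (S : Set ι)
    (hconn : (T.induce S).Connected) (m : ι) (hm : m ∈ S)
    (hmin : ∀ j ∈ S, T.dist r m ≤ T.dist r j) :
    ∀ j ∈ S, m ∈ (tp hT r j).support := by
  intro j hj
  obtain ⟨q⟩ := hconn.preconnected ⟨m, hm⟩ ⟨j, hj⟩
  have hhom := (SimpleGraph.Embedding.induce S (G := T)).toHom
  let q' : T.Walk m j := q.map (SimpleGraph.Embedding.induce S (G := T)).toHom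
  have hsup : ∀ x ∈ q'.support, x ∈ S := by
    intro x hx
    simp only [q'] at hx
    replace hx := Eq.mp (congrArg (x ∈ ·)
      (SimpleGraph.Walk.support_map (SimpleGraph.Embedding.induce S (G := T)).toHom q)) hx
    obtain ⟨y, _, rfl⟩ := List.mem_map.mp hx
    exact y.2
  exact walk_carry hT r m S hmin q' hsup (tp hT r m).end_mem_support

lemma between (hT : T.IsTree) {r j x y : ι}
    (hx : x ∈ (tp hT r j).support) (hy : y ∈ (tp hT r j).support)
    (hd : T.dist r x ≤ T.dist r y) : y ∈ (tp hT x j).support := by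
  have hsp := ((tp hT r j).take_spec hx).symm
  have htake := (tp_isPath hT r j).takeUntil hx
  have hdrop := (tp_isPath hT r j).dropUntil hx
  have hdropeq : (tp hT r j).dropUntil x hx = tp hT x j := eq_tp hT _ hdrop
  have htakeeq : (tp hT r j).takeUntil x hx = tp hT r x := eq_tp hT _ htake
  rw [hsp, SimpleGraph.Walk.mem_support_append_iff] at hy
  rcases hy with hy | hy
  · rw [htakeeq] at hy
    have h1 := mem_support_dist hT hy
    have : y = x := by
      have h2 : T.dist y x = 0 := by omega
      have := hT.isConnected.preconnected y x
      exact (SimpleGraph.Reachable.dist_eq_zero_iff this).mp h2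
    subst this
    rw [← hdropeq]
    exact SimpleGraph.Walk.start_mem_support _
  · rw [← hdropeq]; exact hy

lemma support_subset_connected (hT : T.IsTree) {S : Set ι}
    (hconn : (T.induce S).Connected) {a b : ι} (ha : a ∈ S) (hb : b ∈ S) :
    ∀ x ∈ (tp hT a b).support, x ∈ S := by
  intro x hx
  obtain ⟨q⟩ := hconn.preconnected ⟨a, ha⟩ ⟨b, hb⟩
  let q' : T.Walk a b := q.map (SimpleGraph.Embedding.induce S (G := T)).toHom
  have hsub := support_tp_subset hT q'
  have hx' := hsub hx
  simp only [q'] at hx'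
  replace hx' := Eq.mp (congrArg (x ∈ ·)
    (SimpleGraph.Walk.support_map (SimpleGraph.Embedding.induce S (G := T)).toHom q)) hx'
  obtain ⟨y, _, rfl⟩ := List.mem_map.mp hx'
  exact y.2

lemma sum_min_le (w : ℕ) : ∀ n : ℕ, w + 1 ≤ n →
    2 * (∑ i ∈ Finset.range n, min w i) + w * (w + 1) ≤ 2 * w * n := by
  refine Nat.le_induction ?_ ?_
  · have h1 : ∑ i ∈ Finset.range (w + 1), min w i = ∑ i ∈ Finset.range (w + 1), i := by
      apply Finset.sum_congr rfl
      intro i hi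
      rw [Finset.mem_range] at hi
      exact min_eq_right (by omega)
    have h2 := Finset.sum_range_id_mul_two (w + 1)
    rw [h1]
    simp only [Nat.add_sub_cancel] at h2
    have h3 : 2 * w * (w + 1) = (w + 1) * w + w * (w + 1) := by ring
    linarith
  · intro n hn ih
    rw [Finset.sum_range_succ]
    have : min w n = w := min_eq_left (by omega)
    rw [this]
    have h4 : 2 * w * (n + 1) = 2 * w * n + 2 * w := by ring
    linarith

end StmtAux


/-- A tree decomposition of a graph `G` on vertex type `V`, indexed by the vertices of a
tree `T` on index type `ι`: every vertex of `G` lies in some bag, both endpoints of every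
edge of `G` lie in some common bag, and for every vertex `v` the set of tree nodes whose
bag contains `v` induces a (connected) subtree of `T`. -/
structure TreeDecomp {V ι : Type} (G : SimpleGraph V) (T : SimpleGraph ι) where
  isTree : T.IsTree
  bag : ι → Finset V
  mem_bag : ∀ v : V, ∃ i : ι, v ∈ bag i
  edge_bag : ∀ u v : V, G.Adj u v → ∃ i : ι, u ∈ bag i ∧ v ∈ bag i
  subtree : ∀ v : V, (T.induce {i : ι | v ∈ bag i}).Connected

/-- Let `G` be a graph on `n` vertices of tree-width at most `w` (i.e. `G`
admits a tree decomposition all of whose bags have size at most `w + 1`) whose complement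
`Gᶜ` is closed under the Bondy–Chvátal closure for Hamiltonian paths (any two distinct
non-adjacent vertices `u, v` of `Gᶜ` satisfy `deg_{Gᶜ}(u) + deg_{Gᶜ}(v) < n`).  Then `Gᶜ`
contains a clique on at least `n − 2(w² + w)` vertices: there is a set `S` of at most
`2(w² + w)` vertices such that the vertices outside `S` are pairwise adjacent in `Gᶜ`. -/
theorem stmt1 {V : Type} [Fintype V] [DecidableEq V] (G : SimpleGraph V)
    [DecidableRel G.Adj] (w : ℕ)
    (htw : ∃ (ι : Type) (_ : Fintype ι) (T : SimpleGraph ι) (D : TreeDecomp G T),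
      ∀ i : ι, (D.bag i).card ≤ w + 1)
    (hclosed : ∀ u v : V, u ≠ v → ¬ Gᶜ.Adj u v →
      Gᶜ.degree u + Gᶜ.degree v < Fintype.card V) :
    ∃ S : Finset V, S.card ≤ 2 * (w ^ 2 + w) ∧
      ∀ u v : V, u ∉ S → v ∉ S → u ≠ v → Gᶜ.Adj u v := by
  classical
  by_cases hw0 : w = 0
  · subst hw0
    obtain ⟨ι, _inst, T, D, hbag⟩ := htw
    refine ⟨∅, by simp, ?_⟩
    intro u v _ _ huv
    rw [SimpleGraph.compl_adj]
    refine ⟨huv, fun hadj => ?_⟩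
    obtain ⟨i, hui, hvi⟩ := D.edge_bag u v hadj
    have h1 : 1 < (D.bag i).card := Finset.one_lt_card.mpr ⟨u, hui, v, hvi, huv⟩
    have h2 := hbag i
    omega
  by_cases hsmall : Fintype.card V ≤ 2 * (w ^ 2 + w)
  · exact ⟨Finset.univ, by simpa using hsmall,
      fun u v hu _ _ => absurd (Finset.mem_univ u) hu⟩
  push_neg at hsmall
  have hw1 : 1 ≤ w := Nat.one_le_iff_ne_zero.mpr hw0
  set n := Fintype.card V with hn
  obtain ⟨ι, _inst, T, D, hbag⟩ := htw
  have hT := D.isTree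
  have hVne : Nonempty V := by
    rw [← Fintype.card_pos_iff]; omega
  haveI : DecidableEq ι := Classical.decEq ι
  obtain ⟨r, _⟩ := D.mem_bag (Classical.arbitrary V)
  have hmin : ∀ v : V, ∃ i : ι, v ∈ D.bag i ∧
      ∀ j : ι, v ∈ D.bag j → T.dist r i ≤ T.dist r j := by
    intro v
    obtain ⟨i, hi⟩ := D.mem_bag v
    obtain ⟨m, hm, hmle⟩ := Finset.exists_min_image
      (Finset.univ.filter (fun i => v ∈ D.bag i)) (fun i => T.dist r i) ⟨i, by simp [hi]⟩
    exact ⟨m, (Finset.mem_filter.mp hm).2, fun j hj => hmle j (by simp [hj])⟩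
  choose t ht1 ht2 using hmin
  let idx : V → ℕ := fun v => (Fintype.equivFin V v : ℕ)
  have hidxlt : ∀ v, idx v < n := fun v => (Fintype.equivFin V v).2
  let key : V → ℕ ×ₗ ℕ := fun v => toLex (T.dist r (t v), idx v)
  have hkeyinj : ∀ u v : V, key u = key v → u = v := by
    intro u v h
    have h2 : idx u = idx v := congrArg (fun p => (ofLex p).2) h
    exact (Fintype.equivFin V).injective (Fin.val_injective h2)
  have hkeylt : ∀ u v : V, key u < key v → T.dist r (t u) ≤ T.dist r (t v) := by
    intro u v h
    rcases Prod.Lex.lt_iff.mp h with h | h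
    · exact le_of_lt h
    · exact le_of_eq h.1
  -- main structural lemma: back-neighbours lie in the top bag
  have hK : ∀ u v : V, G.Adj u v → key u < key v → u ∈ D.bag (t v) := by
    intro u v hadj hk
    obtain ⟨j, hju, hjv⟩ := D.edge_bag u v hadj
    have h1 : t v ∈ (StmtAux.tp hT r j).support :=
      StmtAux.min_mem_support hT r {i | v ∈ D.bag i} (D.subtree v) (t v) (ht1 v)
        (fun j hj => ht2 v j hj) j hjv
    have h2 : t u ∈ (StmtAux.tp hT r j).support :=
      StmtAux.min_mem_support hT r {i | u ∈ D.bag i} (D.subtree u) (t u) (ht1 u)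
        (fun j hj => ht2 u j hj) j hju
    have h3 : t v ∈ (StmtAux.tp hT (t u) j).support :=
      StmtAux.between hT h2 h1 (hkeylt u v hk)
    exact StmtAux.support_subset_connected hT (D.subtree u) (ht1 u) hju (t v) h3
  set back : V → ℕ := fun v => (Finset.univ.filter (fun u => G.Adj u v ∧ key u < key v)).card
    with hback
  set fwd : V → ℕ := fun v => (Finset.univ.filter (fun u => G.Adj u v ∧ key v < key u)).card
    with hfwd
  set rk : V → ℕ := fun v => (Finset.univ.filter (fun u => key u < key v)).card with hrk
  have hback_w : ∀ v, back v ≤ w := by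
    intro v
    have hsub : Finset.univ.filter (fun u => G.Adj u v ∧ key u < key v)
        ⊆ (D.bag (t v)).erase v := by
      intro u hu
      rw [Finset.mem_filter] at hu
      exact Finset.mem_erase.mpr ⟨hu.2.1.ne, hK u v hu.2.1 hu.2.2⟩
    have h1 := Finset.card_le_card hsub
    have h2 : ((D.bag (t v)).erase v).card = (D.bag (t v)).card - 1 :=
      Finset.card_erase_of_mem (ht1 v)
    have h3 := hbag (t v)
    have h4 : 0 < (D.bag (t v)).card := Finset.card_pos.mpr ⟨v, ht1 v⟩
    simp only [hback]
    omega
  have hback_rk : ∀ v, back v ≤ rk v := by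
    intro v
    apply Finset.card_le_card
    intro u hu
    rw [Finset.mem_filter] at hu ⊢
    exact ⟨hu.1, hu.2.2⟩
  have hrk_lt : ∀ v, rk v < n := by
    intro v
    have hsub : Finset.univ.filter (fun u => key u < key v) ⊆ Finset.univ.erase v := by
      intro u hu
      rw [Finset.mem_filter] at hu
      exact Finset.mem_erase.mpr ⟨fun he => absurd (congrArg key he) (ne_of_lt hu.2), by simp⟩
    have h1 := Finset.card_le_card hsub
    rw [Finset.card_erase_of_mem (Finset.mem_univ v), Finset.card_univ] at h1
    have h2 : rk v = (Finset.univ.filter (fun u => key u < key v)).card := rfl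
    have : 0 < n := Fintype.card_pos
    omega
  have hmono : ∀ a b : V, key a < key b → rk a < rk b := by
    intro a b h
    have hsub : insert a (Finset.univ.filter (fun u => key u < key a))
        ⊆ Finset.univ.filter (fun u => key u < key b) := by
      intro x hx
      rcases Finset.mem_insert.mp hx with rfl | hx
      · simp [h]
      · rw [Finset.mem_filter] at hx ⊢
        exact ⟨hx.1, hx.2.trans h⟩
    have hnm : a ∉ Finset.univ.filter (fun u => key u < key a) := by simp
    have h1 := Finset.card_le_card hsub
    rw [Finset.card_insert_of_notMem hnm] at h1
    simp only [hrk]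
    omega
  have hrk_inj : ∀ u v : V, u ≠ v → rk u ≠ rk v := by
    intro u v hne
    have hkne : key u ≠ key v := fun h => hne (hkeyinj u v h)
    rcases lt_or_gt_of_ne hkne with h | h
    · exact ne_of_lt (hmono u v h)
    · exact ne_of_gt (hmono v u h)
  have hSB : ∑ v : V, back v ≤ ∑ i ∈ Finset.range n, min w i := by
    have h1 : ∑ v : V, back v ≤ ∑ v : V, min w (rk v) :=
      Finset.sum_le_sum (fun v _ => le_min (hback_w v) (hback_rk v))
    have h2 : ∑ v : V, min w (rk v) = ∑ i ∈ Finset.univ.image rk, min w i := by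
      rw [Finset.sum_image (fun x _ y _ h => by_contra (fun hne => hrk_inj x y hne h))]
    have h3 : Finset.univ.image rk ⊆ Finset.range n := by
      intro i hi
      obtain ⟨v, _, rfl⟩ := Finset.mem_image.mp hi
      exact Finset.mem_range.mpr (hrk_lt v)
    calc ∑ v : V, back v ≤ ∑ v : V, min w (rk v) := h1
      _ = ∑ i ∈ Finset.univ.image rk, min w i := h2
      _ ≤ ∑ i ∈ Finset.range n, min w i :=
        Finset.sum_le_sum_of_subset h3
  have hdeg : ∀ v : V, G.degree v = back v + fwd v := by
    intro v
    have hfl : Finset.univ.filter (fun u => G.Adj v u)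
        = (Finset.univ.filter (fun u => G.Adj u v ∧ key u < key v))
          ∪ (Finset.univ.filter (fun u => G.Adj u v ∧ key v < key u)) := by
      rw [← Finset.filter_or]
      apply Finset.filter_congr
      intro u _
      constructor
      · intro h
        have hne : key u ≠ key v := fun he => (G.ne_of_adj h) (hkeyinj u v he).symm
        rcases lt_or_gt_of_ne hne with hlt | hgt
        · exact Or.inl ⟨h.symm, hlt⟩
        · exact Or.inr ⟨h.symm, hgt⟩
      · rintro (⟨h, _⟩ | ⟨h, _⟩) <;> exact h.symm
    have hdisj : Disjoint (Finset.univ.filter (fun u => G.Adj u v ∧ key u < key v))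
        (Finset.univ.filter (fun u => G.Adj u v ∧ key v < key u)) := by
      rw [Finset.disjoint_left]
      intro x h1 h2
      rw [Finset.mem_filter] at h1 h2
      exact absurd h2.2.2 (not_lt_of_gt h1.2.2)
    rw [SimpleGraph.degree, SimpleGraph.neighborFinset_eq_filter, hfl,
      Finset.card_union_of_disjoint hdisj]
  have hswap : ∑ v : V, fwd v = ∑ v : V, back v := by
    simp only [hback, hfwd, Finset.card_filter]
    have hpt : ∀ v u : V, (G.Adj u v ∧ key v < key u) = (G.Adj v u ∧ key v < key u) :=
      fun v u => by rw [propext (G.adj_comm u v)]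
    simp only [hpt]
    exact Finset.sum_comm
  have hdegsum : ∑ v : V, G.degree v = 2 * ∑ v : V, back v := by
    rw [Finset.sum_congr rfl (fun v _ => hdeg v), Finset.sum_add_distrib, hswap]
    ring
  have hdeg_cover : ∀ u v : V, G.Adj u v → n ≤ 2 * G.degree u + 1 ∨ n ≤ 2 * G.degree v + 1 := by
    intro u v hadj
    have hne := G.ne_of_adj hadj
    have hnc : ¬ Gᶜ.Adj u v := fun h => h.2 hadj
    have h := hclosed u v hne hnc
    rw [SimpleGraph.degree_compl, SimpleGraph.degree_compl] at h
    have h1 := G.degree_lt_card_verts u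
    have h2 := G.degree_lt_card_verts v
    omega
  refine ⟨Finset.univ.filter (fun v => n ≤ 2 * G.degree v + 1), ?_, ?_⟩
  · set H := Finset.univ.filter (fun v => n ≤ 2 * G.degree v + 1) with hH
    by_contra hc
    push_neg at hc
    have hHn : H.card * n ≤ 2 * (∑ v ∈ H, G.degree v) + H.card := by
      calc H.card * n = ∑ _v ∈ H, n := by rw [Finset.sum_const, smul_eq_mul]
        _ ≤ ∑ v ∈ H, (2 * G.degree v + 1) :=
          Finset.sum_le_sum (fun v hv => (Finset.mem_filter.mp hv).2)
        _ = 2 * (∑ v ∈ H, G.degree v) + H.card := by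
          rw [Finset.sum_add_distrib, Finset.sum_const, smul_eq_mul, mul_one, Finset.mul_sum]
    have hsub : ∑ v ∈ H, G.degree v ≤ ∑ v : V, G.degree v :=
      Finset.sum_le_sum_of_subset (Finset.filter_subset _ _)
    have hww : w ≤ w ^ 2 := by nlinarith
    have hM := StmtAux.sum_min_le w n (by omega)
    have hHcard : H.card ≤ n := by
      have := Finset.card_le_card (Finset.filter_subset
        (fun v => n ≤ 2 * G.degree v + 1) Finset.univ)
      rwa [Finset.card_univ] at this
    have hfin : H.card * n ≤ 4 * (∑ i ∈ Finset.range n, min w i) + H.card := by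
      have := hSB
      omega
    have e1 : (2 * (w ^ 2 + w) + 1) * n ≤ H.card * n :=
      Nat.mul_le_mul_right n (by omega)
    have e3 : 4 * w ≤ 2 * (w ^ 2 + w) := by nlinarith
    have e4 : 4 * w * n ≤ 2 * (w ^ 2 + w) * n := Nat.mul_le_mul_right n e3
    nlinarith [hM, hfin, hHcard, e1, e4, hw1]
  · intro u v hu hv hne
    rw [SimpleGraph.compl_adj]
    refine ⟨hne, fun hadj => ?_⟩
    rcases hdeg_cover u v hadj with h | h
    · exact hu (Finset.mem_filter.mpr ⟨Finset.mem_univ u, h⟩)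
    · exact hv (Finset.mem_filter.mpr ⟨Finset.mem_univ v, h⟩)
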